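/- Let t ∈ ℚ with t ∉ {0, 1/2, −1/2} and with D₁(t) = 8t⁷ + 4t⁶ + 8t⁵ + 4t⁴ + 2t³ + t² + 2t + 1 ≠ 0. Suppose a, b, c, d, e, f ∈ ℚ satisfy d² = a(t−1)⁸ + b(t−1)⁴ + c, e² = at⁸ + bt⁴ + c, and f² = a(t+1)⁸ + b(t+1)⁴ + c. Then a(t−2)⁸ + b(t−2)⁴ + c = [3(8t⁸ − 20t⁷ + 36t⁶ − 24t⁵ + 2t⁴ + 15t³ + 9t² − 16t − 10)·d²]/(t·D₁(t)) − [3(4t³ − 18t² + 28t − 15)(2t⁴ − 2t³ + 7t² − 2t + 5)·e²]/D₁(t) + [(4t³ − 18t² + 28t − 15)(2t⁵ − 8t⁴ + 15t³ − 15t² + 8t − 2)·f²]/(t·D₁(t)). In particular, (t−2)² is the x-coordinate of a rational point (with y = g) on y² = ax⁴ + bx² + c if and only if the right-hand side is a rational square g². -/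

import Mathlib

/-- The denominator polynomial `D₁(t)`. -/
def D₁ (t : ℚ) : ℚ :=
  8 * t ^ 7 + 4 * t ^ 6 + 8 * t ^ 5 + 4 * t ^ 4 + 2 * t ^ 3 + t ^ 2 + 2 * t + 1

/-- If `t ∉ {0, 1/2, −1/2}`, `D₁(t) ≠ 0`, and `a, b, c, d, e, f` satisfy
`d² = a(t−1)⁸ + b(t−1)⁴ + c`, `e² = at⁸ + bt⁴ + c`, `f² = a(t+1)⁸ + b(t+1)⁴ + c`, then
`a(t−2)⁸ + b(t−2)⁴ + c` equals the stated explicit combination of `d², e², f²`; in particular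
`(t−2)²` is the `x`-coordinate of a rational point on `y² = ax⁴ + bx² + c` iff that
combination is a rational square. -/
theorem stmt_8 (t : ℚ) (ht : t ∉ ({0, 1/2, -1/2} : Set ℚ)) (hD : D₁ t ≠ 0)
    (a b c d e f : ℚ)
    (hd : d ^ 2 = a * (t - 1) ^ 8 + b * (t - 1) ^ 4 + c)
    (he : e ^ 2 = a * t ^ 8 + b * t ^ 4 + c)
    (hf : f ^ 2 = a * (t + 1) ^ 8 + b * (t + 1) ^ 4 + c) :
    a * (t - 2) ^ 8 + b * (t - 2) ^ 4 + c =
      3 * (8 * t ^ 8 - 20 * t ^ 7 + 36 * t ^ 6 - 24 * t ^ 5 + 2 * t ^ 4 + 15 * t ^ 3 +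
        9 * t ^ 2 - 16 * t - 10) * d ^ 2 / (t * D₁ t)
      - 3 * (4 * t ^ 3 - 18 * t ^ 2 + 28 * t - 15) *
          (2 * t ^ 4 - 2 * t ^ 3 + 7 * t ^ 2 - 2 * t + 5) * e ^ 2 / D₁ t
      + (4 * t ^ 3 - 18 * t ^ 2 + 28 * t - 15) *
          (2 * t ^ 5 - 8 * t ^ 4 + 15 * t ^ 3 - 15 * t ^ 2 + 8 * t - 2) * f ^ 2 /
          (t * D₁ t) ∧
    ((∃ g : ℚ, g ^ 2 = a * (t - 2) ^ 8 + b * (t - 2) ^ 4 + c) ↔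
      ∃ g : ℚ, g ^ 2 =
        3 * (8 * t ^ 8 - 20 * t ^ 7 + 36 * t ^ 6 - 24 * t ^ 5 + 2 * t ^ 4 + 15 * t ^ 3 +
          9 * t ^ 2 - 16 * t - 10) * d ^ 2 / (t * D₁ t)
        - 3 * (4 * t ^ 3 - 18 * t ^ 2 + 28 * t - 15) *
            (2 * t ^ 4 - 2 * t ^ 3 + 7 * t ^ 2 - 2 * t + 5) * e ^ 2 / D₁ t
        + (4 * t ^ 3 - 18 * t ^ 2 + 28 * t - 15) *
            (2 * t ^ 5 - 8 * t ^ 4 + 15 * t ^ 3 - 15 * t ^ 2 + 8 * t - 2) * f ^ 2 /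
            (t * D₁ t)) := by
  have ht0 : t ≠ 0 := fun h => ht (by simp [h])
  have key : a * (t - 2) ^ 8 + b * (t - 2) ^ 4 + c =
      3 * (8 * t ^ 8 - 20 * t ^ 7 + 36 * t ^ 6 - 24 * t ^ 5 + 2 * t ^ 4 + 15 * t ^ 3 +
        9 * t ^ 2 - 16 * t - 10) * d ^ 2 / (t * D₁ t)
      - 3 * (4 * t ^ 3 - 18 * t ^ 2 + 28 * t - 15) *
          (2 * t ^ 4 - 2 * t ^ 3 + 7 * t ^ 2 - 2 * t + 5) * e ^ 2 / D₁ t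
      + (4 * t ^ 3 - 18 * t ^ 2 + 28 * t - 15) *
          (2 * t ^ 5 - 8 * t ^ 4 + 15 * t ^ 3 - 15 * t ^ 2 + 8 * t - 2) * f ^ 2 /
          (t * D₁ t) := by
    rw [hd, he, hf]
    field_simp
    unfold D₁
    ring
  exact ⟨key, by rw [← key]⟩
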